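/- Let Φ be symmetric positive definite, Σ_ε symmetric positive semidefinite, α ∈ (0, 1/‖Φ‖), and Σ^α = α Σ_{k=0}^∞ (I − αΦ)^k Σ_ε (I − αΦ)^k. Then Σ^α satisfies the Riccati equation Φ Σ^α + Σ^α Φ − α Φ Σ^α Φ = Σ_ε. -/

import Mathlib

open Matrix
open scoped RealInnerProductSpace

noncomputable def vnorm {d : ℕ} (v : Fin d → ℝ) : ℝ := Real.sqrt (∑ i, v i ^ 2)

noncomputable def opNorm {d : ℕ} (A : Matrix (Fin d) (Fin d) ℝ) : ℝ :=
  ‖Matrix.toEuclideanCLM (𝕜 := ℝ) A‖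

private lemma aux_cs {E : Type*} [NormedAddCommGroup E] [InnerProductSpace ℝ E]
    (P : E →L[ℝ] E) (hsym : ∀ u v : E, ⟪P u, v⟫ = ⟪u, P v⟫)
    (hpos : ∀ u : E, 0 ≤ ⟪P u, u⟫) (x : E) :
    ‖P x‖ ^ 2 ≤ ‖P‖ * ⟪P x, x⟫ := by
  have key : ∀ u v : E, ⟪P u, v⟫ ^ 2 ≤ ⟪P u, u⟫ * ⟪P v, v⟫ := by
    intro u v
    have hvu : ⟪P v, u⟫ = ⟪P u, v⟫ := by rw [hsym v u, real_inner_comm]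
    have hq : ∀ t : ℝ, 0 ≤ ⟪P v, v⟫ * (t * t) + (2 * ⟪P u, v⟫) * t + ⟪P u, u⟫ := by
      intro t
      have h0 := hpos (u + t • v)
      have expand : ⟪P (u + t • v), u + t • v⟫
          = ⟪P v, v⟫ * (t * t) + (2 * ⟪P u, v⟫) * t + ⟪P u, u⟫ := by
        simp only [map_add, _root_.map_smul, inner_add_left, inner_add_right,
          real_inner_smul_left, real_inner_smul_right, hvu]
        ring
      linarith [expand ▸ h0]
    have hd := discrim_le_zero hq
    rw [discrim] at hd
    nlinarith
  have h1 := key x (P x)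
  have h2 : ⟪P x, P x⟫ = ‖P x‖ ^ 2 := real_inner_self_eq_norm_sq _
  have h3 : ⟪P (P x), P x⟫ ≤ ‖P‖ * ‖P x‖ ^ 2 := by
    calc ⟪P (P x), P x⟫ ≤ ‖P (P x)‖ * ‖P x‖ := real_inner_le_norm _ _
    _ ≤ (‖P‖ * ‖P x‖) * ‖P x‖ := by
        have := P.le_opNorm (P x); nlinarith [norm_nonneg (P x)]
    _ = ‖P‖ * ‖P x‖ ^ 2 := by ring
  rcases eq_or_lt_of_le (norm_nonneg (P x)) with hz | hz
  · rw [← hz]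
    simpa using mul_nonneg (norm_nonneg P) (hpos x)
  · nlinarith [hpos x, mul_pos hz hz, mul_le_mul_of_nonneg_left h3 (hpos x)]

private lemma inner_clm {d : ℕ} (A : Matrix (Fin d) (Fin d) ℝ) (x : EuclideanSpace ℝ (Fin d)) :
    ⟪Matrix.toEuclideanCLM (𝕜 := ℝ) A x, x⟫
      = (WithLp.equiv 2 (Fin d → ℝ) x) ⬝ᵥ A.mulVec (WithLp.equiv 2 (Fin d → ℝ) x) := by
  simp only [PiLp.inner_apply, RCLike.inner_apply, conj_trivial, dotProduct]
  have h : ∀ i, (Matrix.toEuclideanCLM (𝕜 := ℝ) A x) i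
      = A.mulVec (WithLp.equiv 2 (Fin d → ℝ) x) i := by
    intro i
    have h2 := congrFun (Matrix.ofLp_toEuclideanCLM (𝕜 := ℝ) A x) i
    simpa [Matrix.toLin'_apply] using h2
  exact Finset.sum_congr rfl fun i _ => by rw [h i]; rfl

private lemma norm_sq_eq_vnorm {d : ℕ} (x : EuclideanSpace ℝ (Fin d)) :
    ‖x‖ ^ 2 = vnorm (WithLp.equiv 2 (Fin d → ℝ) x) ^ 2 := by
  rw [EuclideanSpace.norm_eq, vnorm]
  have h : ∑ i, ‖x i‖ ^ 2 = ∑ i, ((WithLp.equiv 2 (Fin d → ℝ)) x i) ^ 2 :=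
    Finset.sum_congr rfl fun i _ => by simp [Real.norm_eq_abs, sq_abs]
  rw [h]

set_option maxHeartbeats 1000000 in
set_option synthInstance.maxHeartbeats 200000 in
theorem stmt_4 {d : ℕ} (a α : ℝ) (ha : 0 < a)
    (Φ Se : Matrix (Fin d) (Fin d) ℝ)
    (hΦpd : Φ.PosDef)
    (hmin : ∀ u : Fin d → ℝ, a * vnorm u ^ 2 ≤ u ⬝ᵥ Φ.mulVec u)
    (hSe : Se.PosSemidef)
    (hα : 0 < α) (hα' : α ≤ 1 / opNorm Φ) :
    Φ * (α • ∑' k : ℕ, ((1 : Matrix (Fin d) (Fin d) ℝ) - α • Φ) ^ k * Se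
          * ((1 : Matrix (Fin d) (Fin d) ℝ) - α • Φ) ^ k)
      + (α • ∑' k : ℕ, ((1 : Matrix (Fin d) (Fin d) ℝ) - α • Φ) ^ k * Se
          * ((1 : Matrix (Fin d) (Fin d) ℝ) - α • Φ) ^ k) * Φ
      - α • (Φ * (α • ∑' k : ℕ, ((1 : Matrix (Fin d) (Fin d) ℝ) - α • Φ) ^ k * Se
          * ((1 : Matrix (Fin d) (Fin d) ℝ) - α • Φ) ^ k) * Φ)
      = Se := by
  rcases Nat.eq_zero_or_pos d with hd | hd
  · subst hd; exact Subsingleton.elim _ _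
  set B : Matrix (Fin d) (Fin d) ℝ := (1 : Matrix (Fin d) (Fin d) ℝ) - α • Φ with hB
  set φm := Matrix.toEuclideanCLM (𝕜 := ℝ) (n := Fin d) with hφm
  set P := φm Φ with hP
  -- symmetry of P
  have hsa : _root_.IsSelfAdjoint P := by
    have hstar : star Φ = Φ := by
      rw [Matrix.star_eq_conjTranspose]; exact hΦpd.1
    show star P = P
    rw [hP, ← map_star, hstar]
  have hsym : ∀ u v : EuclideanSpace ℝ (Fin d), ⟪P u, v⟫ = ⟪u, P v⟫ :=
    fun u v => (ContinuousLinearMap.isSelfAdjoint_iff_isSymmetric.mp hsa) u v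
  -- lower bound and positivity
  have hlow : ∀ x : EuclideanSpace ℝ (Fin d), a * ‖x‖ ^ 2 ≤ ⟪P x, x⟫ := by
    intro x
    rw [hP, inner_clm, norm_sq_eq_vnorm]
    exact hmin _
  have hpos : ∀ x, 0 ≤ ⟪P x, x⟫ := fun x =>
    le_trans (by positivity) (hlow x)
  -- a ≤ ‖P‖ and α * ‖P‖ ≤ 1
  have hMa : a ≤ ‖P‖ := by
    set x₀ : EuclideanSpace ℝ (Fin d) := EuclideanSpace.single (⟨0, hd⟩ : Fin d) (1 : ℝ)
    have hx₀ : ‖x₀‖ = 1 := by simp [x₀, EuclideanSpace.norm_single]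
    have h1 := hlow x₀
    have h2 : ⟪P x₀, x₀⟫ ≤ ‖P‖ := by
      calc ⟪P x₀, x₀⟫ ≤ ‖P x₀‖ * ‖x₀‖ := real_inner_le_norm _ _
      _ ≤ (‖P‖ * ‖x₀‖) * ‖x₀‖ := by
          have := P.le_opNorm x₀
          nlinarith [norm_nonneg x₀]
      _ = ‖P‖ := by rw [hx₀]; ring
    rw [hx₀] at h1
    nlinarith
  have hM0 : 0 < ‖P‖ := lt_of_lt_of_le ha hMa
  have hαM : α * ‖P‖ ≤ 1 := by
    have : opNorm Φ = ‖P‖ := by rw [opNorm, hP, hφm]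
    rw [this] at hα'
    rw [le_div_iff₀ hM0] at hα'
    exact hα'
  -- the contraction T
  set T := φm B with hT
  have hTdef : T = 1 - α • P := by rw [hT, hB, map_sub, _root_.map_one, _root_.map_smul, hP]
  set ρ : ℝ := 1 - α * a with hρ
  have hαa : α * a ≤ 1 := by nlinarith
  have hρ0 : 0 ≤ ρ := by rw [hρ]; linarith
  have hρ1 : ρ < 1 := by rw [hρ]; nlinarith
  have hTnorm : ‖T‖ ≤ Real.sqrt ρ := by
    apply ContinuousLinearMap.opNorm_le_bound _ (Real.sqrt_nonneg _)
    intro x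
    have hTx : T x = x - α • P x := by rw [hTdef]; simp
    have hsq : ‖T x‖ ^ 2 = ‖x‖ ^ 2 - 2 * α * ⟪P x, x⟫ + α ^ 2 * ‖P x‖ ^ 2 := by
      rw [hTx, ← real_inner_self_eq_norm_sq]
      simp only [inner_sub_left, inner_sub_right, real_inner_smul_left, real_inner_smul_right,
        real_inner_self_eq_norm_sq]
      rw [real_inner_comm x (P x), norm_smul, Real.norm_eq_abs]
      ring_nf
      try rw [sq_abs]
    have hcs := aux_cs P hsym hpos x
    have h2 : ‖T x‖ ^ 2 ≤ ρ * ‖x‖ ^ 2 := by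
      rw [hsq, hρ]
      nlinarith [hlow x, hpos x, sq_nonneg α, mul_le_mul_of_nonneg_left hcs (sq_nonneg α),
        mul_nonneg hα.le (hpos x), mul_le_mul_of_nonneg_right hαM (mul_nonneg hα.le (hpos x))]
    calc ‖T x‖ = Real.sqrt (‖T x‖ ^ 2) := (Real.sqrt_sq (norm_nonneg _)).symm
    _ ≤ Real.sqrt (ρ * ‖x‖ ^ 2) := Real.sqrt_le_sqrt h2
    _ = Real.sqrt ρ * ‖x‖ := by
        rw [Real.sqrt_mul hρ0, Real.sqrt_sq (norm_nonneg _)]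
  -- summability on the CLM side
  set S := φm Se with hS
  have hTk : ∀ k : ℕ, ‖T ^ k‖ ≤ Real.sqrt ρ ^ k := by
    intro k
    induction k with
    | zero =>
        rw [pow_zero, pow_zero, ContinuousLinearMap.one_def]
        exact ContinuousLinearMap.norm_id_le
    | succ n ih =>
        rw [pow_succ, pow_succ]
        calc ‖T ^ n * T‖ ≤ ‖T ^ n‖ * ‖T‖ := norm_mul_le _ _
        _ ≤ Real.sqrt ρ ^ n * Real.sqrt ρ :=
            mul_le_mul ih hTnorm (norm_nonneg _) (by positivity)
  have hgsum : Summable (fun k : ℕ => T ^ k * S * T ^ k) := by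
    apply Summable.of_norm_bounded (g := fun k => ‖S‖ * ρ ^ k)
      ((summable_geometric_of_lt_one hρ0 hρ1).mul_left _)
    intro k
    have hsq : Real.sqrt ρ ^ k * Real.sqrt ρ ^ k = ρ ^ k := by
      rw [← mul_pow, Real.mul_self_sqrt hρ0]
    calc ‖T ^ k * S * T ^ k‖ ≤ ‖T ^ k * S‖ * ‖T ^ k‖ := norm_mul_le _ _
    _ ≤ (‖T ^ k‖ * ‖S‖) * ‖T ^ k‖ := by
        have := norm_mul_le (T ^ k) S
        nlinarith [norm_nonneg (T ^ k)]
    _ ≤ (Real.sqrt ρ ^ k * ‖S‖) * Real.sqrt ρ ^ k := by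
        have h1 := hTk k
        have h3 : (0:ℝ) ≤ ‖T ^ k‖ := norm_nonneg _
        have h2 : (0:ℝ) ≤ ‖S‖ := norm_nonneg _
        nlinarith [mul_le_mul h1 h1 h3 (le_trans h3 h1), mul_nonneg h3 h2]
    _ = ‖S‖ * ρ ^ k := by rw [← hsq]; ring
  -- transfer summability to the matrix side
  have hfg : ∀ k : ℕ, φm (B ^ k * Se * B ^ k) = T ^ k * S * T ^ k := by
    intro k
    rw [_root_.map_mul, _root_.map_mul, map_pow]
  have hcont : Continuous (φm.symm : (EuclideanSpace ℝ (Fin d) →L[ℝ] EuclideanSpace ℝ (Fin d)) →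
      Matrix (Fin d) (Fin d) ℝ) := by
    exact LinearMap.continuous_of_finiteDimensional
      ({ toFun := φm.symm,
         map_add' := fun x y => map_add _ x y,
         map_smul' := fun c x => map_smul φm.symm c x } :
        (EuclideanSpace ℝ (Fin d) →L[ℝ] EuclideanSpace ℝ (Fin d)) →ₗ[ℝ] Matrix (Fin d) (Fin d) ℝ)
  have hfsum : Summable (fun k : ℕ => B ^ k * Se * B ^ k) := by
    have h := hgsum.map φm.symm hcont
    have heq : (⇑φm.symm ∘ fun k : ℕ => T ^ k * S * T ^ k)
        = fun k : ℕ => B ^ k * Se * B ^ k := by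
      funext k
      rw [Function.comp_apply, ← hfg, StarAlgEquiv.symm_apply_apply]
    rwa [heq] at h
  -- tsum manipulations on the matrix side
  set W := ∑' k : ℕ, B ^ k * Se * B ^ k with hW
  have hshift : B * W * B = W - Se := by
    have h1 : B * W = ∑' k : ℕ, B * (B ^ k * Se * B ^ k) :=
      (Summable.tsum_mul_left B hfsum).symm
    have h2 : (∑' k : ℕ, B * (B ^ k * Se * B ^ k)) * B
        = ∑' k : ℕ, B * (B ^ k * Se * B ^ k) * B :=
      (Summable.tsum_mul_right _ (hfsum.mul_left B)).symm
    have h3 : ∀ k : ℕ, B * (B ^ k * Se * B ^ k) * B = B ^ (k + 1) * Se * B ^ (k + 1) := by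
      intro k
      have hc : B * B ^ k = B ^ k * B := (pow_succ' B k).symm.trans (pow_succ B k)
      calc B * (B ^ k * Se * B ^ k) * B = B * B ^ k * (Se * (B ^ k * B)) := by
            simp only [mul_assoc]
      _ = B ^ k * B * (Se * (B ^ k * B)) := by rw [hc]
      _ = B ^ (k + 1) * Se * B ^ (k + 1) := by rw [pow_succ]; simp only [mul_assoc]
    have h4 : W = Se + ∑' k : ℕ, B ^ (k + 1) * Se * B ^ (k + 1) := by
      have := Summable.tsum_eq_zero_add hfsum
      simpa using this
    rw [h1, h2, tsum_congr h3, h4]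
    abel
  -- finish by algebra
  have hαΦ : α • Φ = 1 - B := by rw [hB]; abel
  have key : Φ * (α • W) + (α • W) * Φ - α • (Φ * (α • W) * Φ) = W - B * W * B := by
    have e1 : Φ * (α • W) = (α • Φ) * W := by
      rw [mul_smul_comm, smul_mul_assoc]
    have e2 : (α • W) * Φ = W * (α • Φ) := by
      rw [smul_mul_assoc, mul_smul_comm]
    have e3 : α • (Φ * (α • W) * Φ) = (α • Φ) * W * (α • Φ) := by
      simp only [mul_smul_comm, smul_mul_assoc, smul_smul]
      try rw [mul_comm α α]
    rw [e3, e1, e2, hαΦ]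
    noncomm_ring
  rw [key, hshift]
  abel
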